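/- Let h : [a,b] → ℝ be C², attaining its maximum at the endpoint a, with h'(a) = 0 and h''(a) < 0, and h(τ) < h(a) for τ ∈ (a,b]. Then as n → ∞, ∫ₐᵇ e^{n h(τ)} dτ ~ e^{n h(a)} · √(π / (-2 n h''(a))). -/

import Mathlib

open Real Filter

open MeasureTheory intervalIntegral

lemma sqrt_exp_decay {m : ℝ} (hm : 0 < m) :
    Tendsto (fun n : ℝ => Real.sqrt n * Real.exp (-(n * m))) atTop (nhds 0) := by
  have hz : Tendsto (fun n : ℝ => n * Real.exp (-(n * m))) atTop (nhds 0) := by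
    have h1 := (Real.tendsto_pow_mul_exp_neg_atTop_nhds_zero 1)
    have h2 : Tendsto (fun n : ℝ => m * n) atTop atTop := tendsto_id.const_mul_atTop hm
    have h3 := (h1.comp h2).const_mul (1/m)
    rw [mul_zero] at h3
    apply h3.congr
    intro n
    simp only [Function.comp]
    rw [pow_one]
    field_simp
  apply squeeze_zero' (g := fun n : ℝ => n * Real.exp (-(n * m)))
  · filter_upwards [eventually_ge_atTop (0:ℝ)] with n hn
    positivity
  · filter_upwards [eventually_ge_atTop (1:ℝ)] with n hn
    have : Real.sqrt n ≤ n := Real.sqrt_le_iff.mpr ⟨by linarith, by nlinarith⟩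
    exact mul_le_mul_of_nonneg_right this (Real.exp_pos _).le
  · exact hz

lemma sqrt_tendsto_atTop : Tendsto Real.sqrt atTop atTop := by
  rw [tendsto_atTop]
  intro M
  filter_upwards [eventually_ge_atTop ((max M 0)^2)] with x hx
  calc M ≤ max M 0 := le_max_left _ _
    _ = Real.sqrt ((max M 0)^2) := (Real.sqrt_sq (le_max_right _ _)).symm
    _ ≤ Real.sqrt x := Real.sqrt_le_sqrt hx

lemma gauss_lim (k δ : ℝ) (hk : 0 < k) (hδ : 0 < δ) :
    Tendsto (fun n : ℝ => Real.sqrt n * ∫ t in (0:ℝ)..δ, Real.exp (-(n * k * t^2)))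
      atTop (nhds (Real.sqrt (π/k)/2)) := by
  have hI : IntegrableOn (fun u : ℝ => Real.exp (-k * u^2)) (Set.Ioi 0) :=
    (integrable_exp_neg_mul_sq hk).integrableOn
  have h1 : Tendsto (fun T : ℝ => ∫ u in (0:ℝ)..T, Real.exp (-k * u^2)) atTop
      (nhds (Real.sqrt (π/k)/2)) := by
    have := intervalIntegral_tendsto_integral_Ioi 0 hI tendsto_id
    rwa [integral_gaussian_Ioi] at this
  have h2 : Tendsto (fun n : ℝ => Real.sqrt n * δ) atTop atTop :=
    sqrt_tendsto_atTop.atTop_mul_const hδ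
  apply (h1.comp h2).congr'
  filter_upwards [eventually_gt_atTop (0:ℝ)] with n hn
  have hsn : (0:ℝ) < Real.sqrt n := Real.sqrt_pos.mpr hn
  have key := integral_comp_mul_left (a := (0:ℝ)) (b := δ)
    (fun u => Real.exp (-k * u^2)) (ne_of_gt hsn)
  simp only [mul_zero, smul_eq_mul] at key
  have hexp : ∀ x : ℝ, Real.exp (-k * (Real.sqrt n * x)^2) = Real.exp (-(n * k * x^2)) := by
    intro x
    congr 1
    rw [mul_pow, Real.sq_sqrt hn.le]
    ring
  simp only [Function.comp]
  simp only [hexp] at key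
  rw [key]
  field_simp

lemma taylor_aux (h : ℝ → ℝ) (a : ℝ) (hd1 : Differentiable ℝ h)
    (hd2 : Differentiable ℝ (deriv h)) (hc2 : Continuous (deriv (deriv h)))
    (h'a : deriv h a = 0) {ε : ℝ} (hε : 0 < ε) :
    ∃ δ > 0, ∀ τ ∈ Set.Icc a (a+δ),
      (deriv (deriv h) a - ε) * (τ-a)^2/2 ≤ h τ - h a ∧
      h τ - h a ≤ (deriv (deriv h) a + ε) * (τ-a)^2/2 := by
  obtain ⟨δ, hδpos, hball⟩ := Metric.continuousAt_iff.mp hc2.continuousAt ε hε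
  refine ⟨δ/2, half_pos hδpos, fun τ hτ => ?_⟩
  have hδ' : ∀ u ∈ Set.Icc a (a + δ/2),
      |deriv (deriv h) u - deriv (deriv h) a| ≤ ε := by
    intro u hu
    have hd : dist u a < δ := by
      rw [Real.dist_eq, abs_of_nonneg (by linarith [hu.1])]
      linarith [hu.2]
    have := hball hd
    rw [Real.dist_eq] at this
    exact this.le
  -- first derivative bounds
  have key1 : ∀ s ∈ Set.Icc a (a + δ/2),
      (deriv (deriv h) a - ε) * (s - a) ≤ deriv h s ∧
      deriv h s ≤ (deriv (deriv h) a + ε) * (s - a) := by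
    intro s hs
    have heq : ∫ u in a..s, deriv (deriv h) u = deriv h s - deriv h a :=
      integral_deriv_eq_sub (fun u _ => hd2 u) (hc2.intervalIntegrable a s)
    rw [h'a, sub_zero] at heq
    have hmemsub : Set.Icc a s ⊆ Set.Icc a (a + δ/2) :=
      Set.Icc_subset_Icc le_rfl hs.2
    constructor
    · have hmono : ∫ u in a..s, (deriv (deriv h) a - ε) ≤ ∫ u in a..s, deriv (deriv h) u := by
        apply integral_mono_on hs.1 intervalIntegrable_const (hc2.intervalIntegrable a s)
        intro u hu
        have := hδ' u (hmemsub hu)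
        linarith [abs_le.mp this |>.1]
      rw [intervalIntegral.integral_const, smul_eq_mul, heq] at hmono
      linarith
    · have hmono : ∫ u in a..s, deriv (deriv h) u ≤ ∫ u in a..s, (deriv (deriv h) a + ε) := by
        apply integral_mono_on hs.1 (hc2.intervalIntegrable a s) intervalIntegrable_const
        intro u hu
        have := hδ' u (hmemsub hu)
        linarith [abs_le.mp this |>.2]
      rw [intervalIntegral.integral_const, smul_eq_mul, heq] at hmono
      linarith
  -- integrate again
  have heq2 : ∫ s in a..τ, deriv h s = h τ - h a :=
    integral_deriv_eq_sub (fun s _ => hd1 s) (hd2.continuous.intervalIntegrable a τ)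
  have hlin : ∀ C : ℝ, ∫ s in a..τ, C * (s - a) = C * (τ-a)^2/2 := by
    intro C
    rw [intervalIntegral.integral_const_mul]
    have : ∫ s in a..τ, (s - a) = (τ-a)^2/2 := by
      have := integral_comp_sub_right (fun x : ℝ => x) a (a := a) (b := τ)
      rw [this, sub_self, integral_id]
      ring
    rw [this]; ring
  have hmemsub : Set.Icc a τ ⊆ Set.Icc a (a + δ/2) := Set.Icc_subset_Icc le_rfl hτ.2
  have hlinint : ∀ C : ℝ, IntervalIntegrable (fun s => C * (s - a)) volume a τ :=
    fun C => (continuous_const.mul (continuous_id.sub continuous_const)).intervalIntegrable a τ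
  constructor
  · have hmono : ∫ s in a..τ, (deriv (deriv h) a - ε) * (s - a) ≤ ∫ s in a..τ, deriv h s := by
      apply integral_mono_on hτ.1 (hlinint _) (hd2.continuous.intervalIntegrable a τ)
      intro s hs
      exact (key1 s (hmemsub hs)).1
    rw [hlin, heq2] at hmono
    exact hmono
  · have hmono : ∫ s in a..τ, deriv h s ≤ ∫ s in a..τ, (deriv (deriv h) a + ε) * (s - a) := by
      apply integral_mono_on hτ.1 (hd2.continuous.intervalIntegrable a τ) (hlinint _)
      intro s hs
      exact (key1 s (hmemsub hs)).2
    rw [hlin, heq2] at hmono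
    exact hmono


/-- endpoint Laplace method:
`∫ₐᵇ e^{n h} ∼ e^{n h(a)} √(π/(-2 n h''(a)))` as `n → ∞`. -/
theorem stmt_14 (a b : ℝ) (hab : a < b)
    (h : ℝ → ℝ) (hh : ContDiff ℝ 2 h)
    (hmax : ∀ τ ∈ Set.Ioc a b, h τ < h a)
    (h'a : deriv h a = 0) (h''a : deriv (deriv h) a < 0) :
    Filter.Tendsto
      (fun n : ℝ => (∫ τ in a..b, Real.exp (n * h τ)) /
        (Real.exp (n * h a) * Real.sqrt (π / (-2 * n * deriv (deriv h) a))))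
      Filter.atTop (nhds 1) := by
  -- regularity facts
  have hh2 : ContDiff ℝ (1+1) h := by norm_num; exact hh
  have hd1 : Differentiable ℝ h := hh.differentiable (by norm_num)
  have hc1 : ContDiff ℝ 1 (deriv h) := (contDiff_succ_iff_deriv.mp hh2).2.2
  have hd2 : Differentiable ℝ (deriv h) := hc1.differentiable one_ne_zero
  have hc2 : Continuous (deriv (deriv h)) := (contDiff_one_iff_deriv.mp hc1).2
  set c : ℝ := -(deriv (deriv h) a) with hcdef
  have hD : deriv (deriv h) a = -c := by rw [hcdef, neg_neg]
  have hc : 0 < c := by rw [hcdef]; linarith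
  set L : ℝ := Real.sqrt (π/(2*c)) with hLdef
  have hL : 0 < L := Real.sqrt_pos.mpr (by positivity)
  have hcontF : ∀ n : ℝ, Continuous (fun τ => Real.exp (n * (h τ - h a))) :=
    fun n => (Real.continuous_exp.comp (continuous_const.mul (hh.continuous.sub continuous_const)))
  have hcontG : ∀ n k : ℝ, Continuous (fun τ : ℝ => Real.exp (-(n * k * (τ - a)^2))) :=
    fun n k => (Real.continuous_exp.comp ((continuous_const.mul
      ((continuous_id.sub continuous_const).pow 2)).neg))
  have hLalt : Real.sqrt (π/(c/2))/2 = L := by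
    rw [hLdef, show π/(c/2) = 4*(π/(2*c)) by field_simp; ring,
      Real.sqrt_mul (by norm_num : (0:ℝ) ≤ 4),
      show Real.sqrt 4 = 2 by rw [show (4:ℝ) = 2^2 by norm_num, Real.sqrt_sq (by norm_num)]]
    ring
  have hcont : ContinuousAt (fun k : ℝ => Real.sqrt (π/k)/2) (c/2) := by
    have h1 : ContinuousAt (fun k : ℝ => π/k) (c/2) :=
      continuousAt_const.div continuousAt_id (by positivity)
    exact (Real.continuous_sqrt.continuousAt.comp h1).div_const 2
  -- main limit
  have main : Tendsto (fun n : ℝ => Real.sqrt n * ∫ τ in a..b, Real.exp (n * (h τ - h a)))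
      atTop (nhds L) := by
    refine tendsto_order.2 ⟨?_, ?_⟩
    · -- lower bound
      intro x hx
      obtain ⟨k, hkx, hkmem⟩ : ∃ k, (x < Real.sqrt (π/k)/2) ∧ k ∈ Set.Ioi (c/2) := by
        have hev : ∀ᶠ t in nhds (c/2), x < Real.sqrt (π/t)/2 :=
          hcont.eventually_const_lt (by show x < Real.sqrt (π/(c/2))/2; rw [hLalt]; exact hx)
        exact ((hev.filter_mono nhdsWithin_le_nhds).and eventually_mem_nhdsWithin).exists
      rw [Set.mem_Ioi] at hkmem
      have hk0 : 0 < k := lt_trans (by positivity) hkmem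
      have hε : (0:ℝ) < 2*k - c := by linarith
      obtain ⟨δ₀, hδ₀, htay⟩ := taylor_aux h a hd1 hd2 hc2 h'a hε
      set δ : ℝ := min δ₀ (b - a) with hδdef
      have hδpos : 0 < δ := lt_min hδ₀ (by linarith)
      have hδle : a + δ ≤ b := by
        have := min_le_right δ₀ (b-a); rw [hδdef]; linarith
      have hsub : Set.Icc a (a+δ) ⊆ Set.Icc a (a+δ₀) :=
        Set.Icc_subset_Icc le_rfl (by have := min_le_left δ₀ (b-a); linarith)
      have hA := gauss_lim k δ hk0 hδpos
      filter_upwards [hA.eventually_const_lt hkx, eventually_ge_atTop (0:ℝ)] with n hn hn0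
      refine lt_of_lt_of_le hn ?_
      have i1 : IntervalIntegrable (fun τ => Real.exp (n*(h τ - h a))) volume a (a+δ) :=
        (hcontF n).intervalIntegrable _ _
      have i2 : IntervalIntegrable (fun τ => Real.exp (n*(h τ - h a))) volume (a+δ) b :=
        (hcontF n).intervalIntegrable _ _
      have hsplit : ∫ τ in a..b, Real.exp (n*(h τ - h a)) =
          (∫ τ in a..(a+δ), Real.exp (n*(h τ - h a))) +
          ∫ τ in (a+δ)..b, Real.exp (n*(h τ - h a)) :=
        (integral_add_adjacent_intervals i1 i2).symm
      have h2nn : 0 ≤ ∫ τ in (a+δ)..b, Real.exp (n*(h τ - h a)) :=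
        integral_nonneg hδle (fun u _ => (Real.exp_pos _).le)
      have hcs : ∫ τ in a..(a+δ), Real.exp (-(n*k*(τ-a)^2)) =
          ∫ t in (0:ℝ)..δ, Real.exp (-(n*k*t^2)) := by
        have := integral_comp_sub_right (a := a) (b := a+δ)
          (fun t => Real.exp (-(n*k*t^2))) a
        simpa using this
      have hmono1 : ∫ τ in a..(a+δ), Real.exp (-(n*k*(τ-a)^2)) ≤
          ∫ τ in a..(a+δ), Real.exp (n*(h τ - h a)) := by
        apply integral_mono_on (by linarith) ((hcontG n k).intervalIntegrable _ _) i1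
        intro τ hτ
        have hb1 := (htay τ (hsub hτ)).1
        rw [hD] at hb1
        apply Real.exp_le_exp.mpr
        have h1 : -(k*(τ-a)^2) ≤ h τ - h a := by linarith
        nlinarith
      calc Real.sqrt n * ∫ t in (0:ℝ)..δ, Real.exp (-(n*k*t^2))
          ≤ Real.sqrt n * ∫ τ in a..(a+δ), Real.exp (n*(h τ - h a)) := by
            rw [← hcs]; exact mul_le_mul_of_nonneg_left hmono1 (Real.sqrt_nonneg n)
        _ ≤ Real.sqrt n * ∫ τ in a..b, Real.exp (n*(h τ - h a)) := by
            rw [hsplit]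
            apply mul_le_mul_of_nonneg_left (by linarith) (Real.sqrt_nonneg n)
    · -- upper bound
      intro x hx
      obtain ⟨k, hkx, hkmem⟩ : ∃ k, (Real.sqrt (π/k)/2 < x) ∧ k ∈ Set.Ioo 0 (c/2) := by
        have hev : ∀ᶠ t in nhds (c/2), Real.sqrt (π/t)/2 < x :=
          hcont.eventually_lt_const (by show Real.sqrt (π/(c/2))/2 < x; rw [hLalt]; exact hx)
        haveI := right_nhdsWithin_Ioo_neBot (show (0:ℝ) < c/2 by positivity)
        exact ((hev.filter_mono nhdsWithin_le_nhds).and eventually_mem_nhdsWithin).exists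
      obtain ⟨hk0, hkc⟩ := hkmem
      have hε : (0:ℝ) < c - 2*k := by linarith
      obtain ⟨δ₀, hδ₀, htay⟩ := taylor_aux h a hd1 hd2 hc2 h'a hε
      set δ : ℝ := min δ₀ (b - a) with hδdef
      have hδpos : 0 < δ := lt_min hδ₀ (by linarith)
      have hδle : a + δ ≤ b := by
        have := min_le_right δ₀ (b-a); rw [hδdef]; linarith
      have hsub : Set.Icc a (a+δ) ⊆ Set.Icc a (a+δ₀) :=
        Set.Icc_subset_Icc le_rfl (by have := min_le_left δ₀ (b-a); linarith)
      -- tail maximum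
      obtain ⟨ξ, hξmem, hξmax⟩ := (isCompact_Icc (a := a+δ) (b := b)).exists_isMaxOn
        ⟨a+δ, Set.left_mem_Icc.mpr hδle⟩ (hh.continuous.continuousOn)
      set m : ℝ := h a - h ξ with hmdef
      have hm : 0 < m := by
        have := hmax ξ ⟨lt_of_lt_of_le (by linarith) hξmem.1, hξmem.2⟩
        rw [hmdef]; linarith
      have hbound : ∀ τ ∈ Set.Icc (a+δ) b, h τ - h a ≤ -m := by
        intro τ hτ
        have := hξmax hτ
        simp only [Set.mem_setOf_eq] at this
        rw [hmdef]; linarith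
      have hA := gauss_lim k δ hk0 hδpos
      have hB : Tendsto (fun n : ℝ => Real.sqrt n * ((b - (a+δ)) * Real.exp (-(n*m))))
          atTop (nhds 0) := by
        have := (sqrt_exp_decay hm).const_mul (b - (a+δ))
        rw [mul_zero] at this
        apply this.congr
        intro n; ring
      have hsum := hA.add hB
      rw [add_zero] at hsum
      filter_upwards [hsum.eventually_lt_const hkx, eventually_ge_atTop (0:ℝ)] with n hn hn0
      refine lt_of_le_of_lt ?_ hn
      have i1 : IntervalIntegrable (fun τ => Real.exp (n*(h τ - h a))) volume a (a+δ) :=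
        (hcontF n).intervalIntegrable _ _
      have i2 : IntervalIntegrable (fun τ => Real.exp (n*(h τ - h a))) volume (a+δ) b :=
        (hcontF n).intervalIntegrable _ _
      have hsplit : ∫ τ in a..b, Real.exp (n*(h τ - h a)) =
          (∫ τ in a..(a+δ), Real.exp (n*(h τ - h a))) +
          ∫ τ in (a+δ)..b, Real.exp (n*(h τ - h a)) :=
        (integral_add_adjacent_intervals i1 i2).symm
      have hcs : ∫ τ in a..(a+δ), Real.exp (-(n*k*(τ-a)^2)) =
          ∫ t in (0:ℝ)..δ, Real.exp (-(n*k*t^2)) := by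
        have := integral_comp_sub_right (a := a) (b := a+δ)
          (fun t => Real.exp (-(n*k*t^2))) a
        simpa using this
      have hmono1 : ∫ τ in a..(a+δ), Real.exp (n*(h τ - h a)) ≤
          ∫ τ in a..(a+δ), Real.exp (-(n*k*(τ-a)^2)) := by
        apply integral_mono_on (by linarith) i1 ((hcontG n k).intervalIntegrable _ _)
        intro τ hτ
        have hb1 := (htay τ (hsub hτ)).2
        rw [hD] at hb1
        apply Real.exp_le_exp.mpr
        have h1 : h τ - h a ≤ -(k*(τ-a)^2) := by linarith
        nlinarith
      have hmono2 : ∫ τ in (a+δ)..b, Real.exp (n*(h τ - h a)) ≤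
          (b - (a+δ)) * Real.exp (-(n*m)) := by
        have : ∫ τ in (a+δ)..b, Real.exp (n*(h τ - h a)) ≤
            ∫ _ in (a+δ)..b, Real.exp (-(n*m)) := by
          apply integral_mono_on hδle i2 intervalIntegrable_const
          intro τ hτ
          apply Real.exp_le_exp.mpr
          have := hbound τ hτ
          nlinarith
        rwa [intervalIntegral.integral_const, smul_eq_mul] at this
      calc Real.sqrt n * ∫ τ in a..b, Real.exp (n*(h τ - h a))
          ≤ Real.sqrt n * ((∫ t in (0:ℝ)..δ, Real.exp (-(n*k*t^2))) +
              (b - (a+δ)) * Real.exp (-(n*m))) := by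
            rw [hsplit]
            apply mul_le_mul_of_nonneg_left ?_ (Real.sqrt_nonneg n)
            rw [← hcs]
            exact add_le_add hmono1 hmono2
        _ = Real.sqrt n * (∫ t in (0:ℝ)..δ, Real.exp (-(n*k*t^2))) +
              Real.sqrt n * ((b - (a+δ)) * Real.exp (-(n*m))) := by ring
  -- conclude
  have hconc : Tendsto (fun n : ℝ =>
      (Real.sqrt n * ∫ τ in a..b, Real.exp (n * (h τ - h a))) / L) atTop (nhds 1) := by
    have := main.div_const L
    rwa [div_self hL.ne'] at this
  apply hconc.congr'
  filter_upwards [eventually_gt_atTop (0:ℝ)] with n hn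
  have hsn : 0 < Real.sqrt n := Real.sqrt_pos.mpr hn
  have hint : ∫ τ in a..b, Real.exp (n * h τ) =
      Real.exp (n * h a) * ∫ τ in a..b, Real.exp (n*(h τ - h a)) := by
    rw [← intervalIntegral.integral_const_mul]
    apply integral_congr
    intro τ _
    show Real.exp (n * h τ) = Real.exp (n * h a) * Real.exp (n * (h τ - h a))
    rw [← Real.exp_add]
    ring_nf
  have hden : Real.sqrt (π/(-2*n*deriv (deriv h) a)) = L / Real.sqrt n := by
    rw [hD, hLdef]
    rw [show (-2:ℝ)*n*(-c) = (2*c)*n by ring, ← div_div, div_eq_mul_inv (π/(2*c))]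
    rw [Real.sqrt_mul (by positivity) n⁻¹, Real.sqrt_inv]
    ring
  rw [hint, hden]
  rw [div_eq_div_iff (by positivity) (by positivity)]
  field_simp
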